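/- Let P be a path that is a subpath of a cycle whose edges are properly 2-colored with colors 2 and 3 alternately (except possibly one uncolored edge), and suppose the endpoints of every edge colored 2 lie in different classes of a bipartition {A, B} of the path's vertices. If the path has 2l edges all colored 2 and 3 alternately, then the number of B-vertices is exactly one more than the number of A-vertices whenever color 2 is used l times; in general, for any such path F, b_F ≤ a_F + 3, where a_F and b_F count the A- and B-vertices of F. -/

import Mathlib

open Finset in
open Classical in
lemma auxK (N : ℕ) (c : ℕ → ℕ) (x : ℕ → ℤ)
    (hx : ∀ j, x j = 1 ∨ x j = -1)
    (hcol : ∀ j, c j = 0 ∨ c j = 2 ∨ c j = 3)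
    (huniq : ∀ j k, j < N → k < N → j ≠ k → c j = 0 → c k = 0 → False)
    (halt' : ∀ j, c j ≠ 0 → c (j + 1) ≠ 0 → c j ≠ c (j + 1))
    (hpair : ∀ j, c j = 2 → x j + x (j + 1) = 0)
    (htriple : ∀ j, c j = 2 ∨ c (j + 1) = 2 ∨ c (j + 1 + 1) = 2) :
    ∀ m, m < N →
      (∑ j ∈ Finset.range (m + 1), x j) ≤
        1 + (if ∃ j, j < m ∧ c j = 0 then (1 : ℤ) else 0) + (if c m = 3 then 0 else 1) := by
  have hz0 : ∀ k, k < N → c k = 0 →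
      (if ∃ j, j < k ∧ c j = 0 then (1 : ℤ) else 0) = 0 := by
    intro k hk hck
    rw [if_neg]
    rintro ⟨j, hj, hcj⟩
    exact huniq j k (by omega) hk (by omega) hcj hck
  intro m
  induction m using Nat.strong_induction_on with
  | _ m ih =>
  intro hmN
  cases m with
  | zero =>
    have h0 := hx 0
    rw [Finset.sum_range_succ, Finset.sum_range_zero, zero_add]
    split_ifs <;> omega
  | succ n =>
    have hnN : n < N := by omega
    have ihn := ih n (by omega) hnN
    have hsum : ∑ j ∈ range (n + 1 + 1), x j = (∑ j ∈ range (n + 1), x j) + x (n + 1) :=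
      Finset.sum_range_succ x (n + 1)
    rcases hcol n with h0 | h2 | h3
    · -- c n = 0
      have hzn := hz0 n hnN h0
      rw [hzn] at ihn
      have hzm : (if ∃ j, j < n + 1 ∧ c j = 0 then (1 : ℤ) else 0) = 1 :=
        if_pos ⟨n, by omega, h0⟩
      rw [hzm]
      by_cases hcm : c (n + 1) = 3
      · rw [if_pos hcm]
        have hSn : (∑ j ∈ range (n + 1), x j) ≤ 1 := by
          cases n with
          | zero =>
            have := hx 0
            rw [Finset.sum_range_succ, Finset.sum_range_zero, zero_add]
            omega
          | succ k =>
            have h2k : c k = 2 := by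
              rcases htriple k with h | h | h
              · exact h
              · omega
              · omega
            have hp := hpair k h2k
            cases k with
            | zero =>
              norm_num at hp
              have hexp : (∑ j ∈ range (0 + 1 + 1), x j) = x 0 + x 1 := by
                rw [Finset.sum_range_succ, Finset.sum_range_succ, Finset.sum_range_zero, zero_add]
              rw [hexp]; omega
            | succ j =>
              have hjN : j < N := by omega
              have ihj := ih j (by omega) hjN
              have hj0 : c j ≠ 0 := fun hh =>
                huniq j (j + 1 + 1) (by omega) (by omega) (by omega) hh h0
              have hj2 : c j ≠ 2 := by
                intro hh
                exact halt' j hj0 (by omega) (by omega)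
              have hj3 : c j = 3 := by rcases hcol j with a | a | a <;> omega
              rw [if_pos hj3] at ihj
              have hzj : (if ∃ l, l < j ∧ c l = 0 then (1 : ℤ) else 0) = 0 := by
                rw [if_neg]
                rintro ⟨l, hl, hcl⟩
                exact huniq l (j + 1 + 1) (by omega) (by omega) (by omega) hcl h0
              rw [hzj] at ihj
              have hexp : (∑ i ∈ range (j + 1 + 1 + 1), x i) =
                  (∑ i ∈ range (j + 1), x i) + x (j + 1) + x (j + 1 + 1) := by
                rw [Finset.sum_range_succ, Finset.sum_range_succ]
              rw [hexp]
              omega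
        have := hx (n + 1)
        rw [hsum]
        omega
      · rw [if_neg hcm]
        rw [if_neg (by omega : ¬ c n = 3)] at ihn
        have := hx (n + 1)
        rw [hsum]
        omega
    · -- c n = 2
      have hp := hpair n h2
      cases n with
      | zero =>
        norm_num at hp
        have hexp : (∑ j ∈ range (0 + 1 + 1), x j) = x 0 + x 1 := by
          rw [Finset.sum_range_succ, Finset.sum_range_succ, Finset.sum_range_zero, zero_add]
        rw [hexp]
        split_ifs <;> omega
      | succ k =>
        have hkN : k < N := by omega
        have ihk := ih k (by omega) hkN
        have hexp : (∑ j ∈ range (k + 1 + 1 + 1), x j) =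
            (∑ j ∈ range (k + 1), x j) + (x (k + 1) + x (k + 1 + 1)) := by
          rw [Finset.sum_range_succ, Finset.sum_range_succ]; ring
        rw [hexp, hp, add_zero]
        rcases hcol k with hk0 | hk2 | hk3
        · -- c k = 0
          rw [if_pos (⟨k, by omega, hk0⟩ : ∃ j, j < k + 1 + 1 ∧ c j = 0)]
          rw [hz0 k hkN hk0] at ihk
          split_ifs at ihk ⊢ <;> omega
        · -- c k = 2 contradicts c (k+1) = 2
          exfalso
          exact halt' k (by omega) (by omega) (by omega)
        · -- c k = 3
          rw [if_pos hk3] at ihk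
          have hmono : (if ∃ j, j < k ∧ c j = 0 then (1 : ℤ) else 0) ≤
              (if ∃ j, j < k + 1 + 1 ∧ c j = 0 then (1 : ℤ) else 0) := by
            split_ifs with ha hb
            · exact le_refl _
            · obtain ⟨j, hj, hcj⟩ := ha
              exact absurd ⟨j, by omega, hcj⟩ hb
            · norm_num
            · exact le_refl _
          split_ifs at ihk hmono ⊢ <;> omega
    · -- c n = 3
      have hwm : ¬ c (n + 1) = 3 := by
        intro hc
        exact halt' n (by omega) (by omega) (by omega)
      rw [hsum, if_neg hwm]
      rw [if_pos h3] at ihn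
      have hmono : (if ∃ j, j < n ∧ c j = 0 then (1 : ℤ) else 0) ≤
          (if ∃ j, j < n + 1 ∧ c j = 0 then (1 : ℤ) else 0) := by
        split_ifs with ha hb
        · exact le_refl _
        · obtain ⟨j, hj, hcj⟩ := ha
          exact absurd ⟨j, by omega, hcj⟩ hb
        · norm_num
        · exact le_refl _
      have := hx (n + 1)
      split_ifs at ihn hmono ⊢ <;> omega


lemma uniq0 {N : ℕ} (ccol : Fin N → ℕ)
    (hzero : (Finset.univ.filter fun i => ccol i = 0).card ≤ 1) :
    ∀ p q : Fin N, p ≠ q → ccol p = 0 → ccol q = 0 → False := by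
  intro p q hne hp hq
  have hsub : ({p, q} : Finset (Fin N)) ⊆ Finset.univ.filter fun i => ccol i = 0 := by
    intro r hr
    simp only [Finset.mem_insert, Finset.mem_singleton] at hr
    rcases hr with h | h <;> subst h <;> simp [hp, hq]
  have h2 : ({p, q} : Finset (Fin N)).card = 2 := Finset.card_pair hne
  have := Finset.card_le_card hsub
  omega

open Fin.NatCast in
lemma tripleLemma (N : ℕ) [NeZero N] (hN : 3 ≤ N) (ccol : Fin N → ℕ)
    (hcolors : ∀ i, ccol i = 0 ∨ ccol i = 2 ∨ ccol i = 3)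
    (hzero : (Finset.univ.filter fun i => ccol i = 0).card ≤ 1)
    (hzeroOdd : Even N → ∀ i, ccol i ≠ 0)
    (halt : ∀ i : Fin N, ccol i ≠ 0 → ccol (i + 1) ≠ 0 → ccol i ≠ ccol (i + 1)) :
    ∀ i : Fin N, ccol i = 2 ∨ ccol (i + 1) = 2 ∨ ccol (i + 1 + 1) = 2 := by
  have huniqF := uniq0 ccol hzero
  have hval : ∀ k : ℕ, k < N → (((k : ℕ) : Fin N) : ℕ) = k := by
    intro k hk
    simp [Fin.val_natCast, Nat.mod_eq_of_lt hk]
  have hne_add : ∀ (p : Fin N) (d : ℕ), 0 < d → d < N → p ≠ p + (d : Fin N) := by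
    intro p d h1 h2 h
    have h0 : p + (0 : Fin N) = p + (d : Fin N) := by rw [add_zero]; exact h
    have h3 : (0 : Fin N) = (d : Fin N) := add_left_cancel h0
    have h4 := congrArg Fin.val h3
    rw [hval d h2] at h4
    simp at h4
    omega
  intro i
  by_cases h1 : ccol (i + 1) = 0
  · -- middle-zero case: use the alternation around the whole cycle
    have hNodd : N % 2 = 1 := by
      rcases Nat.even_or_odd N with he | ho
      · exact absurd h1 (hzeroOdd he _)
      · exact Nat.odd_iff.mp ho
    set z : Fin N := i + 1 with hz
    have honly : ∀ q : Fin N, q ≠ z → ccol q ≠ 0 := fun q hq h => huniqF q z hq h h1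
    have hFne : ∀ k : ℕ, 1 ≤ k → k ≤ N - 1 → ccol (z + (k : Fin N)) ≠ 0 := by
      intro k hk1 hk2
      apply honly
      exact fun h => hne_add z k (by omega) (by omega) h.symm
    have hstep : ∀ k : ℕ, 1 ≤ k → k + 1 ≤ N - 1 →
        ccol (z + ((k + 1 : ℕ) : Fin N)) = 5 - ccol (z + (k : Fin N)) := by
      intro k hk1 hk2
      have ha := hFne k hk1 (by omega)
      have hb := hFne (k + 1) (by omega) hk2
      have hcast : z + ((k + 1 : ℕ) : Fin N) = (z + (k : Fin N)) + 1 := by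
        rw [Nat.cast_add, Nat.cast_one]; exact (add_assoc _ _ _).symm
      rw [hcast] at hb ⊢
      have hne := halt (z + (k : Fin N)) ha hb
      rcases hcolors (z + (k : Fin N)) with h | h | h <;>
        rcases hcolors ((z + (k : Fin N)) + 1) with h' | h' | h' <;> omega
    have hF1 : ccol (z + ((1 : ℕ) : Fin N)) = 2 ∨ ccol (z + ((1 : ℕ) : Fin N)) = 3 := by
      have := hFne 1 le_rfl (by omega)
      rcases hcolors (z + ((1 : ℕ) : Fin N)) with h | h | h <;> omega
    have hmain : ∀ k : ℕ, k ≤ N - 2 →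
        ccol (z + ((1 + k : ℕ) : Fin N)) =
          if k % 2 = 0 then ccol (z + ((1 : ℕ) : Fin N))
          else 5 - ccol (z + ((1 : ℕ) : Fin N)) := by
      intro k
      induction k with
      | zero => intro _; simp
      | succ k ihk =>
        intro hk
        have e : (1 + (k + 1) : ℕ) = (1 + k) + 1 := by omega
        rw [e, hstep (1 + k) (by omega) (by omega), ihk (by omega)]
        rcases hF1 with h | h <;> rw [h] <;> split_ifs <;> omega
    have hfinal := hmain (N - 2) (le_refl _)
    rw [show (1 + (N - 2) : ℕ) = N - 1 by omega, if_neg (by omega : ¬ (N - 2) % 2 = 0)] at hfinal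
    have e3 : z + ((N - 1 : ℕ) : Fin N) = i := by
      rw [hz]
      have e : (1 : Fin N) + ((N - 1 : ℕ) : Fin N) = 0 := by
        have h5 : ((1 : ℕ) : Fin N) + ((N - 1 : ℕ) : Fin N) = ((1 + (N - 1) : ℕ) : Fin N) :=
          (Nat.cast_add _ _).symm
        rw [show (1 + (N - 1) : ℕ) = N by omega, Fin.natCast_self] at h5
        rw [← Nat.cast_one (R := Fin N)]
        exact h5
      rw [add_assoc, e, add_zero]
    rw [e3] at hfinal
    have e4 : z + ((1 : ℕ) : Fin N) = i + 1 + 1 := by rw [hz, Nat.cast_one]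
    rw [e4] at hfinal hF1
    rcases hF1 with h | h
    · right; right; exact h
    · left; omega
  · by_cases h0 : ccol i = 0
    · have h2ne : ccol (i + 1 + 1) ≠ 0 := by
        intro h
        apply huniqF i (i + 1 + 1) ?_ h0 h
        have e : i + 1 + 1 = i + ((2 : ℕ) : Fin N) := by
          rw [add_assoc, show (2 : ℕ) = 1 + 1 from rfl, Nat.cast_add, Nat.cast_one]
        rw [e]
        exact hne_add i 2 (by omega) (by omega)
      have hne := halt (i + 1) h1 h2ne
      rcases hcolors (i + 1) with h | h | h <;> rcases hcolors (i + 1 + 1) with h' | h' | h' <;> omega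
    · have hne := halt i h0 h1
      rcases hcolors i with h | h | h <;> rcases hcolors (i + 1) with h' | h' | h' <;> omega


open Classical in
lemma auxK3 (N : ℕ) (c : ℕ → ℕ) (x : ℕ → ℤ)
    (hx : ∀ j, x j = 1 ∨ x j = -1)
    (hcol : ∀ j, c j = 0 ∨ c j = 2 ∨ c j = 3)
    (huniq : ∀ j k, j < N → k < N → j ≠ k → c j = 0 → c k = 0 → False)
    (halt' : ∀ j, c j ≠ 0 → c (j + 1) ≠ 0 → c j ≠ c (j + 1))
    (hpair : ∀ j, c j = 2 → x j + x (j + 1) = 0)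
    (htriple : ∀ j, c j = 2 ∨ c (j + 1) = 2 ∨ c (j + 1 + 1) = 2) :
    ∀ m, m < N → (∑ j ∈ Finset.range (m + 1), x j) ≤ 3 := by
  intro m hm
  have := auxK N c x hx hcol huniq halt' hpair htriple m hm
  split_ifs at this <;> omega



/- STATEMENT 7: Let `F` be a subpath (an arc of `m` edges, `m < N`) of a cycle of
length `N` whose edges are colored with colors 2 and 3 alternately, except at most
one edge colored 0 (and even cycles carry no 0-colored edge), and suppose the two
endpoints of every edge colored 2 lie in different classes of the bipartition
`{A, B}` (`B` the complement of `A`) of the vertices.  Then `b_F ≤ a_F + 3`, where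
`a_F` and `b_F` count the `A`- and `B`-vertices of the path `F`.
The cycle has vertices `cvert i` for `i : Fin N` and edges `cvert i — cvert (i+1)`
(indices mod `N`), with edge `i` colored `ccol i`. -/
open Fin.NatCast in
theorem statement7 {V : Type*} [DecidableEq V] (N : ℕ) [NeZero N] (hN : 3 ≤ N)
    (cvert : Fin N → V) (hinj : Function.Injective cvert)
    (ccol : Fin N → ℕ)
    (A : Set V) [DecidablePred (· ∈ A)]
    (hcolors : ∀ i, ccol i = 0 ∨ ccol i = 2 ∨ ccol i = 3)
    (hzero : (Finset.univ.filter fun i => ccol i = 0).card ≤ 1)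
    (hzeroOdd : Even N → ∀ i, ccol i ≠ 0)
    (halt : ∀ i : Fin N, ccol i ≠ 0 → ccol (i + 1) ≠ 0 → ccol i ≠ ccol (i + 1))
    (h2AB : ∀ i : Fin N, ccol i = 2 → (cvert i ∈ A ↔ cvert (i + 1) ∉ A))
    -- the subpath: vertices `cvert (t + j)` for `j = 0, …, m`
    (t : Fin N) (m : ℕ) (hm : m < N) :
    (Finset.univ.filter fun j : Fin (m + 1) => cvert (t + ((j : ℕ) : Fin N)) ∉ A).card ≤
      (Finset.univ.filter fun j : Fin (m + 1) => cvert (t + ((j : ℕ) : Fin N)) ∈ A).card + 3 := by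
  have hsucc : ∀ j : ℕ, t + ((j + 1 : ℕ) : Fin N) = (t + ((j : ℕ) : Fin N)) + 1 := by
    intro j; rw [Nat.cast_add, Nat.cast_one, add_assoc]
  have hinjc : ∀ j k : ℕ, j < N → k < N →
      t + ((j : ℕ) : Fin N) = t + ((k : ℕ) : Fin N) → j = k := by
    intro j k hj hk h
    have h2 := add_left_cancel h
    have h3 := congrArg Fin.val h2
    simpa [Fin.val_natCast, Nat.mod_eq_of_lt hj, Nat.mod_eq_of_lt hk] using h3
  have htr := tripleLemma N hN ccol hcolors hzero hzeroOdd halt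
  have hx' : ∀ j : ℕ, (if cvert (t + ((j : ℕ) : Fin N)) ∈ A then (-1 : ℤ) else 1) = 1 ∨
      (if cvert (t + ((j : ℕ) : Fin N)) ∈ A then (-1 : ℤ) else 1) = -1 := by
    intro j; by_cases h : cvert (t + ((j : ℕ) : Fin N)) ∈ A <;> simp [h]
  have hcol' : ∀ j : ℕ, ccol (t + ((j : ℕ) : Fin N)) = 0 ∨ ccol (t + ((j : ℕ) : Fin N)) = 2 ∨
      ccol (t + ((j : ℕ) : Fin N)) = 3 := fun j => hcolors _
  have huniq' : ∀ j k : ℕ, j < N → k < N → j ≠ k → ccol (t + ((j : ℕ) : Fin N)) = 0 →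
      ccol (t + ((k : ℕ) : Fin N)) = 0 → False := by
    intro j k hj hk hne hcj hck
    exact uniq0 ccol hzero _ _ (fun h => hne (hinjc j k hj hk h)) hcj hck
  have halt'' : ∀ j : ℕ, ccol (t + ((j : ℕ) : Fin N)) ≠ 0 →
      ccol (t + ((j + 1 : ℕ) : Fin N)) ≠ 0 →
      ccol (t + ((j : ℕ) : Fin N)) ≠ ccol (t + ((j + 1 : ℕ) : Fin N)) := by
    intro j ha hb
    rw [hsucc j] at hb ⊢
    exact halt _ ha hb
  have hpair'' : ∀ j : ℕ, ccol (t + ((j : ℕ) : Fin N)) = 2 →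
      (if cvert (t + ((j : ℕ) : Fin N)) ∈ A then (-1 : ℤ) else 1) +
      (if cvert (t + ((j + 1 : ℕ) : Fin N)) ∈ A then (-1 : ℤ) else 1) = 0 := by
    intro j hc
    have hiff := h2AB _ hc
    rw [hsucc j]
    by_cases h : cvert (t + ((j : ℕ) : Fin N)) ∈ A
    · rw [if_pos h, if_neg (hiff.mp h)]; ring
    · have hmem : cvert ((t + ((j : ℕ) : Fin N)) + 1) ∈ A := by
        by_contra h2
        exact h (hiff.mpr h2)
      rw [if_neg h, if_pos hmem]; ring
  have htrip'' : ∀ j : ℕ, ccol (t + ((j : ℕ) : Fin N)) = 2 ∨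
      ccol (t + ((j + 1 : ℕ) : Fin N)) = 2 ∨ ccol (t + ((j + 1 + 1 : ℕ) : Fin N)) = 2 := by
    intro j
    rcases htr (t + ((j : ℕ) : Fin N)) with h | h | h
    · exact Or.inl h
    · right; left; rw [hsucc j]; exact h
    · right; right; rw [hsucc (j + 1), hsucc j]; exact h
  have key := auxK3 N (fun j : ℕ => ccol (t + ((j : ℕ) : Fin N)))
      (fun j : ℕ => if cvert (t + ((j : ℕ) : Fin N)) ∈ A then (-1 : ℤ) else 1)
      hx' hcol' huniq' halt'' hpair'' htrip'' m hm
  rw [← Fin.sum_univ_eq_sum_range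
      (fun j : ℕ => if cvert (t + ((j : ℕ) : Fin N)) ∈ A then (-1 : ℤ) else 1) (m + 1)] at key
  simp only [Finset.sum_ite, Finset.sum_const, nsmul_eq_mul, mul_neg_one, mul_one] at key
  have hc1 : ((Finset.univ.filter fun j : Fin (m + 1) =>
      ¬ cvert (t + ((j : ℕ) : Fin N)) ∈ A).card : ℤ) -
      ((Finset.univ.filter fun j : Fin (m + 1) => cvert (t + ((j : ℕ) : Fin N)) ∈ A).card : ℤ) ≤ 3 := by
    linarith [key]
  omega
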